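/- arXiv:1003.3799 — 2 statements merged into one kernel-verified Lean document; each statement's English description precedes it below -/
import Mathlib

section
/- Let B be a Banach space, a < b real numbers, and F : ℝ → B a continuous function vanishing outside [a, b] with F(a) = F(b) = 0. Assume F is twice differentiable on (a, b), F'' is Bochner integrable on (δ, b) for every δ > 0, and ‖F''(ω)‖ ≤ M (ω − a)^{-3/2} for ω near a. Then ‖∫_a^b e^{-i t ω} F(ω) dω‖ = O(t^{-3/2}) as t → +∞. -/
open MeasureTheory Set

lemma aux_rpow_int {a x y : ℝ} (p : ℝ)
    (h : -1 < p ∨ p ≠ -1 ∧ (0:ℝ) ∉ uIcc (x - a) (y - a)) :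
    ∫ ω in x..y, (ω - a) ^ p = ((y - a) ^ (p + 1) - (x - a) ^ (p + 1)) / (p + 1) := by
  rw [show (fun ω : ℝ => (ω - a) ^ p) = fun ω : ℝ => (fun u : ℝ => u ^ p) (ω - a) from rfl,
    intervalIntegral.integral_comp_sub_right (fun u : ℝ => u ^ p) a]
  exact integral_rpow h

lemma aux_rpow_ii {a x y : ℝ} (p : ℝ) (hx : a < x) (hxy : x ≤ y) :
    IntervalIntegrable (fun ω : ℝ => (ω - a) ^ p) volume x y := by
  apply ContinuousOn.intervalIntegrable
  intro ω hω
  rw [uIcc_of_le hxy] at hω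
  have h1 : ContinuousAt (fun ω : ℝ => ω - a) ω := by fun_prop
  exact (h1.rpow_const (Or.inl (ne_of_gt (by linarith [hω.1])))).continuousWithinAt

lemma aux_rpow_ii0 {a : ℝ} {p : ℝ} (hp : 0 ≤ p) (x y : ℝ) :
    IntervalIntegrable (fun ω : ℝ => (ω - a) ^ p) volume x y := by
  apply Continuous.intervalIntegrable
  rw [continuous_iff_continuousAt]
  intro ω
  have h1 : ContinuousAt (fun ω : ℝ => ω - a) ω := by fun_prop
  exact h1.rpow_const (Or.inr hp)

set_option maxHeartbeats 1000000 in
/-- Jensen–Kato lemma: if `F : ℝ → B` is continuous, vanishes outside `[a,b]` and at the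
endpoints, is twice differentiable on `(a,b)`, with `F''` Bochner integrable on `(a+δ, b)` for all
`δ > 0` and `‖F''(ω)‖ ≤ M (ω−a)^{−3/2}` near `a`, then
`‖∫_a^b e^{−itω} F(ω) dω‖ = O(t^{−3/2})` as `t → +∞`. -/
theorem stmt4 {B : Type*} [NormedAddCommGroup B] [NormedSpace ℂ B] [CompleteSpace B]
    (a b : ℝ) (hab : a < b) (F F' F'' : ℝ → B) (M : ℝ)
    (hFc : Continuous F)
    (hsupp : ∀ ω : ℝ, ω ∉ Icc a b → F ω = 0)
    (hFa : F a = 0) (hFb : F b = 0)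
    (hd1 : ∀ ω ∈ Ioo a b, HasDerivAt F (F' ω) ω)
    (hd2 : ∀ ω ∈ Ioo a b, HasDerivAt F' (F'' ω) ω)
    (hint : ∀ δ : ℝ, 0 < δ → IntegrableOn F'' (Ioo (a + δ) b))
    (hM : ∃ c : ℝ, a < c ∧ ∀ ω ∈ Ioo a c, ‖F'' ω‖ ≤ M * (ω - a) ^ (-(3 / 2) : ℝ)) :
    ∃ C : ℝ, ∀ t : ℝ, 1 ≤ t →
      ‖∫ ω in a..b, Complex.exp (-Complex.I * t * ω) • F ω‖ ≤ C * t ^ (-(3 / 2) : ℝ) := by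
  obtain ⟨c, hac, hMc⟩ := hM
  set c0 : ℝ := (a + min c b) / 2 with hc0def
  have hminc : a < min c b := lt_min hac hab
  have hac0 : a < c0 := by rw [hc0def]; linarith
  have hc0m : c0 < min c b := by rw [hc0def]; linarith
  have hc0c : c0 < c := lt_of_lt_of_le hc0m (min_le_left _ _)
  have hc0b : c0 < b := lt_of_lt_of_le hc0m (min_le_right _ _)
  have hc0ab : c0 ∈ Ioo a b := ⟨hac0, hc0b⟩
  set d : ℝ := c0 - a with hddef
  have hdpos : 0 < d := sub_pos.mpr hac0
  have hM0 : 0 ≤ M := by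
    have h1 := hMc c0 ⟨hac0, hc0c⟩
    have h2 : 0 < (c0 - a) ^ (-(3/2) : ℝ) := Real.rpow_pos_of_pos hdpos _
    nlinarith [norm_nonneg (F'' c0)]
  have hII : ∀ x y : ℝ, a < x → x ≤ y → y ≤ b → IntervalIntegrable F'' volume x y := by
    intro x y hx hxy hyb
    rw [intervalIntegrable_iff_integrableOn_Ioo_of_le hxy]
    exact (hint ((x - a)/2) (by linarith)).mono_set (Ioo_subset_Ioo (by linarith) hyb)
  have ftc2 : ∀ x y : ℝ, x ∈ Ioo a b → y ∈ Ioo a b → x ≤ y →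
      F' y - F' x = ∫ s in x..y, F'' s := by
    intro x y hx hy hxy
    refine (intervalIntegral.integral_eq_sub_of_hasDerivAt ?_ (hII x y hx.1 hxy hy.2.le)).symm
    intro s hs
    rw [uIcc_of_le hxy] at hs
    exact hd2 s ⟨lt_of_lt_of_le hx.1 hs.1, lt_of_le_of_lt hs.2 hy.2⟩
  have hF'cont : ContinuousOn F' (Ioo a b) :=
    fun ω hω => ((hd2 ω hω).differentiableAt.continuousAt).continuousWithinAt
  have ftc1 : ∀ x y : ℝ, x ∈ Ioo a b → y ∈ Ioo a b → x ≤ y →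
      F y - F x = ∫ s in x..y, F' s := by
    intro x y hx hy hxy
    refine (intervalIntegral.integral_eq_sub_of_hasDerivAt ?_ ?_).symm
    · intro s hs
      rw [uIcc_of_le hxy] at hs
      exact hd1 s ⟨lt_of_lt_of_le hx.1 hs.1, lt_of_le_of_lt hs.2 hy.2⟩
    · apply ContinuousOn.intervalIntegrable
      apply hF'cont.mono
      rw [uIcc_of_le hxy]
      exact fun s hs => ⟨lt_of_lt_of_le hx.1 hs.1, lt_of_le_of_lt hs.2 hy.2⟩
  set K2 : ℝ := ‖F' c0‖ * d ^ ((1:ℝ)/2) + 2 * M with hK2def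
  have hd12 : (0:ℝ) ≤ d ^ ((1:ℝ)/2) := Real.rpow_nonneg hdpos.le _
  have hK2nonneg : 0 ≤ K2 := by
    have h1 := mul_nonneg (norm_nonneg (F' c0)) hd12
    rw [hK2def]; linarith
  -- pointwise bound on F' near a
  have hF'bd : ∀ ω ∈ Ioc a c0, ‖F' ω‖ ≤ K2 * (ω - a) ^ (-(1/2) : ℝ) := by
    intro ω hω
    have hωab : ω ∈ Ioo a b := ⟨hω.1, lt_of_le_of_lt hω.2 hc0b⟩
    have heq := ftc2 ω c0 hωab hc0ab hω.2
    have h1 : ‖F' ω‖ ≤ ‖F' c0‖ + ‖∫ s in ω..c0, F'' s‖ := by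
      have h0 : F' ω = F' c0 - ∫ s in ω..c0, F'' s := by rw [← heq]; abel
      rw [h0]; exact norm_sub_le _ _
    have hb2 : ‖∫ s in ω..c0, F'' s‖ ≤ |∫ s in ω..c0, M * (s - a) ^ (-(3/2) : ℝ)| := by
      apply intervalIntegral.norm_integral_le_abs_of_norm_le
      · filter_upwards [ae_restrict_mem measurableSet_uIoc] with s hs
        rw [uIoc_of_le hω.2] at hs
        exact hMc s ⟨lt_trans hω.1 hs.1, lt_of_le_of_lt hs.2 hc0c⟩
      · exact (aux_rpow_ii _ hω.1 hω.2).const_mul M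
    have hval0 : ∫ s in ω..c0, (s - a) ^ (-(3/2) : ℝ)
        = 2 * (ω - a) ^ (-(1/2):ℝ) - 2 * (c0 - a) ^ (-(1/2):ℝ) := by
      rw [aux_rpow_int (-(3/2))
        (Or.inr ⟨by norm_num, by
          rw [uIcc_of_le (by linarith [hω.1, hω.2] : ω - a ≤ c0 - a)]
          exact fun h0 => absurd h0.1 (by push_neg; linarith [hω.1])⟩)]
      norm_num
      ring
    have hmono : (c0 - a) ^ (-(1/2):ℝ) ≤ (ω - a) ^ (-(1/2):ℝ) :=
      Real.rpow_le_rpow_of_nonpos (by linarith [hω.1]) (by linarith [hω.2]) (by norm_num)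
    have habs : |∫ s in ω..c0, M * (s - a) ^ (-(3/2) : ℝ)|
        = M * (2 * (ω - a) ^ (-(1/2):ℝ) - 2 * (c0 - a) ^ (-(1/2):ℝ)) := by
      rw [intervalIntegral.integral_const_mul, hval0, abs_of_nonneg]
      exact mul_nonneg hM0 (by linarith)
    have hA : (0:ℝ) < (ω - a) ^ (-(1/2):ℝ) := Real.rpow_pos_of_pos (by linarith [hω.1]) _
    have hB : (0:ℝ) < d ^ (-(1/2):ℝ) := Real.rpow_pos_of_pos hdpos _
    have hBA : d ^ (-(1/2):ℝ) ≤ (ω - a) ^ (-(1/2):ℝ) := by rw [hddef]; exact hmono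
    have hDB : d ^ ((1:ℝ)/2) * d ^ (-(1/2):ℝ) = 1 := by
      rw [← Real.rpow_add hdpos]; norm_num
    have hN1 : ‖F' c0‖ * (d ^ ((1:ℝ)/2) * d ^ (-(1/2):ℝ)) = ‖F' c0‖ := by
      rw [hDB, mul_one]
    have hprod : ‖F' c0‖ * (d ^ ((1:ℝ)/2) * d ^ (-(1/2):ℝ))
        ≤ ‖F' c0‖ * (d ^ ((1:ℝ)/2) * (ω - a) ^ (-(1/2):ℝ)) := by
      apply mul_le_mul_of_nonneg_left _ (norm_nonneg _)
      exact mul_le_mul_of_nonneg_left hBA hd12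
    rw [hK2def]
    have hcd : (c0 - a) ^ (-(1/2):ℝ) = d ^ (-(1/2):ℝ) := by rw [hddef]
    rw [hcd] at habs
    nlinarith [mul_nonneg hM0 hB.le]
  -- pointwise bound on F near a
  have hFbd : ∀ ω ∈ Ioc a c0, ‖F ω‖ ≤ 2 * K2 * (ω - a) ^ ((1:ℝ)/2) := by
    intro ω hω
    have hωab : ω ∈ Ioo a b := ⟨hω.1, lt_of_le_of_lt hω.2 hc0b⟩
    have key : ∀ x ∈ Ioo a ω, ‖F ω - F x‖ ≤ 2 * K2 * (ω - a) ^ ((1:ℝ)/2) := by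
      intro x hx
      have hxab : x ∈ Ioo a b := ⟨hx.1, lt_trans hx.2 hωab.2⟩
      have heq : F ω - F x = ∫ s in x..ω, F' s := by
        have h0 := ftc1 x ω hxab hωab hx.2.le
        rw [h0]
      rw [heq]
      have hle : ‖∫ s in x..ω, F' s‖ ≤ |∫ s in x..ω, K2 * (s - a) ^ (-(1/2):ℝ)| := by
        apply intervalIntegral.norm_integral_le_abs_of_norm_le
        · filter_upwards [ae_restrict_mem measurableSet_uIoc] with s hs
          rw [uIoc_of_le hx.2.le] at hs
          exact hF'bd s ⟨lt_trans hx.1 hs.1, le_trans hs.2 hω.2⟩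
        · exact (aux_rpow_ii _ hx.1 hx.2.le).const_mul K2
      have hval0 : ∫ s in x..ω, (s - a) ^ (-(1/2) : ℝ)
          = 2 * (ω - a) ^ ((1/2):ℝ) - 2 * (x - a) ^ ((1/2):ℝ) := by
        rw [aux_rpow_int (-(1/2)) (Or.inl (by norm_num))]
        norm_num
        ring
      have hxa : (0:ℝ) ≤ (x - a) ^ ((1/2):ℝ) := Real.rpow_nonneg (by linarith [hx.1]) _
      have hwa : (x - a) ^ ((1/2):ℝ) ≤ (ω - a) ^ ((1/2):ℝ) :=
        Real.rpow_le_rpow (by linarith [hx.1]) (by linarith [hx.2]) (by norm_num)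
      have habs : |∫ s in x..ω, K2 * (s - a) ^ (-(1/2):ℝ)|
          = K2 * (2 * (ω - a) ^ ((1/2):ℝ) - 2 * (x - a) ^ ((1/2):ℝ)) := by
        rw [intervalIntegral.integral_const_mul, hval0, abs_of_nonneg]
        exact mul_nonneg hK2nonneg (by linarith)
      rw [habs] at hle
      nlinarith [mul_nonneg hK2nonneg hxa]
    have hlim : Filter.Tendsto (fun x => ‖F ω - F x‖) (nhdsWithin a (Ioi a)) (nhds ‖F ω‖) := by
      have h0 : Filter.Tendsto (fun x => ‖F ω - F x‖) (nhds a) (nhds ‖F ω - F a‖) :=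
        ((continuous_const.sub hFc).norm).tendsto a
      rw [hFa, sub_zero] at h0
      exact h0.mono_left nhdsWithin_le_nhds
    exact le_of_tendsto hlim (Filter.eventually_of_mem (Ioo_mem_nhdsGT hω.1) key)
  set G : ℝ → B := fun ω => F' c0 + ∫ s in c0..ω, F'' s with hGdef
  have hGeq : ∀ ω ∈ Ioo a b, G ω = F' ω := by
    intro ω hω
    rcases le_total c0 ω with h | h
    · rw [hGdef]; simp only; rw [← ftc2 c0 ω hc0ab hω h]; abel
    · rw [hGdef]; simp only
      rw [intervalIntegral.integral_symm, ← ftc2 ω c0 hω hc0ab h]; abel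
  set K4 : ℝ := ∫ s in c0..b, ‖F'' s‖ with hK4def
  have hK4 : 0 ≤ K4 :=
    intervalIntegral.integral_nonneg hc0b.le (fun s _ => norm_nonneg _)
  refine ⟨(4*K2/3) * d^((3:ℝ)/2) + 2*K2*d^((1:ℝ)/2) + ‖G b‖ + K2*d^(-(1/2):ℝ)
      + (2*M*d^(-(1/2):ℝ) + K4), ?_⟩
  intro t ht
  have ht0 : (0:ℝ) < t := lt_of_lt_of_le one_pos ht
  set δ : ℝ := d / t with hδdef
  have hδpos : 0 < δ := div_pos hdpos ht0
  have hδd : δ ≤ d := div_le_self hdpos.le ht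
  set x0 : ℝ := a + δ with hx0def
  have hax0 : a < x0 := by rw [hx0def]; linarith
  have hx0c0 : x0 ≤ c0 := by rw [hx0def]; rw [hddef] at hδd; linarith
  have hx0b : x0 < b := lt_of_le_of_lt hx0c0 hc0b
  have hx0ab : x0 ∈ Ioo a b := ⟨hax0, hx0b⟩
  have hx0a : x0 - a = δ := by rw [hx0def]; ring
  set E : ℝ → ℂ := fun ω => Complex.exp (-Complex.I * t * ω) with hEdef
  have hE1 : ∀ ω : ℝ, ‖E ω‖ = 1 := by
    intro ω
    rw [hEdef]
    simp only
    rw [show (-Complex.I * t * ω : ℂ) = ((-(t*ω):ℝ):ℂ) * Complex.I by push_cast; ring]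
    exact Complex.norm_exp_ofReal_mul_I _
  have hEcont : Continuous E := by
    rw [hEdef]
    exact Complex.continuous_exp.comp ((continuous_const.mul Complex.continuous_ofReal))
  have hder_e : ∀ ω : ℝ, HasDerivAt E ((-Complex.I*t) * E ω) ω := by
    intro ω
    have h0 : HasDerivAt (fun s : ℝ => ((s:ℂ))) 1 ω := by
      simpa using (hasDerivAt_id ω).ofReal_comp
    have h1 : HasDerivAt (fun s : ℝ => -Complex.I*t*(s:ℂ)) (-Complex.I*t) ω := by
      simpa using h0.const_mul (-Complex.I*(t:ℂ))
    have h2 := h1.cexp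
    rw [hEdef]
    simpa [mul_comm] using h2
  set ct : ℂ := (-Complex.I*t)⁻¹ with hctdef
  have hctnz : (-Complex.I*(t:ℂ)) ≠ 0 := by
    apply mul_ne_zero (neg_ne_zero.mpr Complex.I_ne_zero)
    exact_mod_cast ht0.ne'
  have hctinv : ct * (-Complex.I*t) = 1 := inv_mul_cancel₀ hctnz
  have hctnorm : ‖ct‖ = 1/t := by
    rw [hctdef, norm_inv, norm_mul, norm_neg, Complex.norm_I, one_mul, Complex.norm_real,
      Real.norm_eq_abs, abs_of_pos ht0, one_div]
  -- continuity of G on [x0, b]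
  have hGcont : ContinuousOn G (Icc x0 b) := by
    rw [hGdef]
    apply continuousOn_const.add
    have := intervalIntegral.continuousOn_primitive_interval'
      (hII x0 b hax0 hx0b.le le_rfl) (by rw [uIcc_of_le hx0b.le]; exact ⟨hx0c0, hc0b.le⟩)
    rwa [uIcc_of_le hx0b.le] at this
  -- integrability pieces
  have hint1 : IntervalIntegrable (fun ω => E ω • F ω) volume x0 b :=
    (hEcont.smul hFc).intervalIntegrable _ _
  have hint2 : IntervalIntegrable (fun ω => (ct * E ω) • G ω) volume x0 b := by
    apply ContinuousOn.intervalIntegrable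
    rw [uIcc_of_le hx0b.le]
    exact ((continuous_const.mul hEcont).continuousOn).smul hGcont
  have hint3 : IntervalIntegrable (fun ω => ((ct*ct) * E ω) • F'' ω) volume x0 b := by
    rw [intervalIntegrable_iff_integrableOn_Ioo_of_le hx0b.le]
    have hbase : IntegrableOn F'' (Ioo x0 b) := by
      rw [hx0def]; exact hint δ hδpos
    apply Integrable.mono' (hbase.norm.const_mul ‖ct*ct‖)
    · exact ((continuous_const.mul hEcont).aestronglyMeasurable).smul hbase.aestronglyMeasurable
    · apply Filter.Eventually.of_forall
      intro s
      rw [norm_smul, norm_mul, hE1, mul_one]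
  -- first integration by parts
  have hIBP1 : ∫ ω in x0..b, (E ω • F ω + (ct * E ω) • G ω)
      = (ct * E b) • F b - (ct * E x0) • F x0 := by
    apply intervalIntegral.integral_eq_sub_of_hasDeriv_right_of_le hx0b.le
    · exact (((continuous_const.mul hEcont).smul hFc).continuousOn)
    · intro s hs
      have hsab : s ∈ Ioo a b := ⟨lt_trans hax0 hs.1, hs.2⟩
      have h := ((hder_e s).const_mul ct).smul (hd1 s hsab)
      have h2 : ct * (-Complex.I*t*E s) = E s := by rw [← mul_assoc, hctinv, one_mul]
      rw [hGeq s hsab]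
      have h3 : (ct * E s) • F' s + (ct * (-Complex.I*↑t * E s)) • F s
          = E s • F s + (ct * E s) • F' s := by rw [h2]; abel
      rw [← h3]
      exact h.hasDerivWithinAt
    · exact hint1.add hint2
  -- second integration by parts
  have hG' : ∀ s ∈ Ioo x0 b, HasDerivAt G (F'' s) s := by
    intro s hs
    have hsab : s ∈ Ioo a b := ⟨lt_trans hax0 hs.1, hs.2⟩
    refine (hd2 s hsab).congr_of_eventuallyEq ?_
    filter_upwards [isOpen_Ioo.mem_nhds hsab] with u hu using hGeq u hu
  have hIBP2 : ∫ ω in x0..b, ((ct * E ω) • G ω + ((ct*ct) * E ω) • F'' ω)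
      = ((ct*ct) * E b) • G b - ((ct*ct) * E x0) • G x0 := by
    apply intervalIntegral.integral_eq_sub_of_hasDeriv_right_of_le hx0b.le
    · exact ((continuous_const.mul hEcont).continuousOn).smul hGcont
    · intro s hs
      have h := ((hder_e s).const_mul (ct*ct)).smul (hG' s hs)
      have h2 : ct*ct * (-Complex.I*↑t * E s) = ct * E s := by
        rw [show ct*ct * (-Complex.I*↑t * E s) = (ct * (-Complex.I*↑t)) * (ct * E s) by ring,
          hctinv, one_mul]
      have h3 : (ct*ct * E s) • F'' s + (ct*ct * (-Complex.I*↑t * E s)) • G s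
          = (ct * E s) • G s + (ct*ct * E s) • F'' s := by rw [h2]; abel
      rw [← h3]
      exact h.hasDerivWithinAt
    · exact hint2.add hint3
  -- combine
  have hadd1 : ∫ ω in x0..b, (E ω • F ω + (ct * E ω) • G ω)
      = (∫ ω in x0..b, E ω • F ω) + ∫ ω in x0..b, (ct * E ω) • G ω :=
    intervalIntegral.integral_add hint1 hint2
  have hadd2 : ∫ ω in x0..b, ((ct * E ω) • G ω + ((ct*ct) * E ω) • F'' ω)
      = (∫ ω in x0..b, (ct * E ω) • G ω) + ∫ ω in x0..b, ((ct*ct) * E ω) • F'' ω :=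
    intervalIntegral.integral_add hint2 hint3
  have hI2eq : ∫ ω in x0..b, E ω • F ω
      = -((ct * E x0) • F x0) - ((ct*ct) * E b) • G b + ((ct*ct) * E x0) • G x0
        + ∫ ω in x0..b, ((ct*ct) * E ω) • F'' ω := by
    have e1 := hIBP1; rw [hadd1] at e1
    have e2 := hIBP2; rw [hadd2] at e2
    have hA := eq_sub_of_add_eq e2
    have hB := eq_sub_of_add_eq e1
    rw [hB, hA, hFb, smul_zero]
    abel
  -- norm bounds for boundary pieces
  have hFx0 : ‖F x0‖ ≤ 2*K2*δ^((1:ℝ)/2) := by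
    have h0 := hFbd x0 ⟨hax0, hx0c0⟩; rwa [hx0a] at h0
  have hGx0 : ‖G x0‖ ≤ K2*δ^(-(1/2):ℝ) := by
    rw [hGeq x0 hx0ab]
    have h0 := hF'bd x0 ⟨hax0, hx0c0⟩; rwa [hx0a] at h0
  -- bound on the integral of ‖F''‖
  have hF''n1 := (hII x0 c0 hax0 hx0c0 hc0b.le).norm
  have hF''n2 := (hII c0 b hac0 hc0b.le le_rfl).norm
  have hsplitF'' : ∫ s in x0..b, ‖F'' s‖ = (∫ s in x0..c0, ‖F'' s‖) + K4 := by
    rw [hK4def]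
    exact (intervalIntegral.integral_add_adjacent_intervals hF''n1 hF''n2).symm
  have hF''near : ∫ s in x0..c0, ‖F'' s‖ ≤ 2*M*δ^(-(1/2):ℝ) := by
    have hstep : ∫ s in x0..c0, ‖F'' s‖ ≤ ∫ s in x0..c0, M * (s-a)^(-(3/2):ℝ) := by
      apply intervalIntegral.integral_mono_on hx0c0 hF''n1
        ((aux_rpow_ii _ hax0 hx0c0).const_mul M)
      intro s hs
      exact hMc s ⟨lt_of_lt_of_le hax0 hs.1, lt_of_le_of_lt hs.2 hc0c⟩
    have hval0 : ∫ s in x0..c0, (s - a) ^ (-(3/2) : ℝ)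
        = 2 * (x0 - a) ^ (-(1/2):ℝ) - 2 * (c0 - a) ^ (-(1/2):ℝ) := by
      rw [aux_rpow_int (-(3/2)) (Or.inr ⟨by norm_num, by
        rw [uIcc_of_le (by linarith : x0 - a ≤ c0 - a)]
        exact fun h0 => absurd h0.1 (by push_neg; linarith)⟩)]
      norm_num
      ring
    rw [intervalIntegral.integral_const_mul, hval0, hx0a] at hstep
    have h0 : 0 ≤ (c0-a)^(-(1/2):ℝ) := Real.rpow_nonneg (by linarith) _
    nlinarith [mul_nonneg hM0 h0]
  have hF''tot : ∫ s in x0..b, ‖F'' s‖ ≤ 2*M*δ^(-(1/2):ℝ) + K4 := by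
    rw [hsplitF'']; linarith
  -- norm of the remaining integral term
  have hT5 : ‖∫ ω in x0..b, ((ct*ct) * E ω) • F'' ω‖
      ≤ (1/t)*((1/t)* ∫ s in x0..b, ‖F'' s‖) := by
    have h1 : ‖∫ ω in x0..b, ((ct*ct) * E ω) • F'' ω‖
        ≤ |∫ s in x0..b, (1/t)*((1/t)*‖F'' s‖)| := by
      apply intervalIntegral.norm_integral_le_abs_of_norm_le
      · apply Filter.Eventually.of_forall
        intro s
        rw [norm_smul, norm_mul, norm_mul, hE1, mul_one, hctnorm]
        exact le_of_eq (by ring)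
      · exact ((hII x0 b hax0 hx0b.le le_rfl).norm.const_mul (1/t)).const_mul (1/t)
    rw [intervalIntegral.integral_const_mul, intervalIntegral.integral_const_mul] at h1
    have h2 : (0:ℝ) ≤ ∫ s in x0..b, ‖F'' s‖ :=
      intervalIntegral.integral_nonneg hx0b.le (fun s _ => norm_nonneg _)
    rwa [abs_of_nonneg (by positivity)] at h1
  -- triangle inequality for the four pieces
  have tri : ∀ P Q R S : B, ‖-P - Q + R + S‖ ≤ ‖P‖ + ‖Q‖ + ‖R‖ + ‖S‖ := by
    intro P Q R S
    calc ‖-P - Q + R + S‖ ≤ ‖-P - Q + R‖ + ‖S‖ := norm_add_le _ _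
      _ ≤ (‖-P - Q‖ + ‖R‖) + ‖S‖ := by gcongr; exact norm_add_le _ _
      _ ≤ ((‖-P‖ + ‖Q‖) + ‖R‖) + ‖S‖ := by gcongr; exact norm_sub_le _ _
      _ = ‖P‖ + ‖Q‖ + ‖R‖ + ‖S‖ := by rw [norm_neg]
  have hN2 : ‖(ct * E x0) • F x0‖ ≤ (1/t)*(2*K2*δ^((1:ℝ)/2)) := by
    rw [norm_smul, norm_mul, hE1, mul_one, hctnorm]
    exact mul_le_mul_of_nonneg_left hFx0 (by positivity)
  have hN3 : ‖((ct*ct) * E b) • G b‖ ≤ (1/t)*((1/t)*‖G b‖) := by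
    rw [norm_smul, norm_mul, norm_mul, hE1, mul_one, hctnorm]
    exact le_of_eq (by ring)
  have hN4 : ‖((ct*ct) * E x0) • G x0‖ ≤ (1/t)*((1/t)*(K2*δ^(-(1/2):ℝ))) := by
    rw [norm_smul, norm_mul, norm_mul, hE1, mul_one, hctnorm]
    calc 1/t*(1/t)*‖G x0‖ ≤ 1/t*(1/t)*(K2*δ^(-(1/2):ℝ)) := by
          apply mul_le_mul_of_nonneg_left hGx0 (by positivity)
      _ = (1/t)*((1/t)*(K2*δ^(-(1/2):ℝ))) := by ring
  have hN5 : ‖∫ ω in x0..b, ((ct*ct) * E ω) • F'' ω‖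
      ≤ (1/t)*((1/t)*(2*M*δ^(-(1/2):ℝ) + K4)) := by
    refine le_trans hT5 ?_
    apply mul_le_mul_of_nonneg_left _ (by positivity)
    exact mul_le_mul_of_nonneg_left hF''tot (by positivity)
  have hI2 : ‖∫ ω in x0..b, E ω • F ω‖
      ≤ (1/t)*(2*K2*δ^((1:ℝ)/2)) + (1/t)*((1/t)*‖G b‖)
        + (1/t)*((1/t)*(K2*δ^(-(1/2):ℝ))) + (1/t)*((1/t)*(2*M*δ^(-(1/2):ℝ) + K4)) := by
    rw [hI2eq]
    refine le_trans (tri _ _ _ _) ?_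
    exact add_le_add (add_le_add (add_le_add hN2 hN3) hN4) hN5
  -- bound for the piece near a
  have hI1 : ‖∫ ω in a..x0, E ω • F ω‖ ≤ 2*K2*(δ^((3:ℝ)/2)/(3/2)) := by
    have h1 : ‖∫ ω in a..x0, E ω • F ω‖ ≤ |∫ ω in a..x0, 2*K2*(ω-a)^((1:ℝ)/2)| := by
      apply intervalIntegral.norm_integral_le_abs_of_norm_le
      · filter_upwards [ae_restrict_mem measurableSet_uIoc] with s hs
        rw [uIoc_of_le hax0.le] at hs
        rw [norm_smul, hE1, one_mul]
        exact hFbd s ⟨hs.1, le_trans hs.2 hx0c0⟩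
      · exact (aux_rpow_ii0 (by norm_num) a x0).const_mul _
    have hval : ∫ ω in a..x0, (ω-a)^((1:ℝ)/2) = (x0-a)^((3:ℝ)/2)/(3/2) := by
      rw [aux_rpow_int ((1:ℝ)/2) (Or.inl (by norm_num))]
      norm_num [Real.zero_rpow]
    rw [intervalIntegral.integral_const_mul, hval, hx0a] at h1
    have h2 : (0:ℝ) ≤ δ^((3:ℝ)/2)/(3/2) := by positivity
    rwa [abs_of_nonneg (mul_nonneg (by linarith) h2)] at h1
  -- split the full integral
  have htotal : (∫ ω in a..b, Complex.exp (-Complex.I * t * ω) • F ω)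
      = (∫ ω in a..x0, E ω • F ω) + ∫ ω in x0..b, E ω • F ω :=
    (intervalIntegral.integral_add_adjacent_intervals
      ((hEcont.smul hFc).intervalIntegrable _ _) hint1).symm
  -- rpow arithmetic
  have hδ32 : δ^((3:ℝ)/2) = d^((3:ℝ)/2) * t^(-(3/2):ℝ) := by
    rw [hδdef, Real.div_rpow hdpos.le ht0.le, Real.rpow_neg ht0.le, div_eq_mul_inv]
  have hδ12 : δ^((1:ℝ)/2) = d^((1:ℝ)/2) * t^(-(1/2):ℝ) := by
    rw [hδdef, Real.div_rpow hdpos.le ht0.le, Real.rpow_neg ht0.le, div_eq_mul_inv]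
  have hδm12 : δ^(-(1/2):ℝ) = d^(-(1/2):ℝ) * t^((1:ℝ)/2) := by
    rw [hδdef, Real.div_rpow hdpos.le ht0.le, Real.rpow_neg ht0.le, div_eq_mul_inv, inv_inv]
  have hta : (1/t) * t^(-(1/2):ℝ) = t^(-(3/2):ℝ) := by
    rw [one_div, ← Real.rpow_neg_one, ← Real.rpow_add ht0]
    norm_num
  have htb : (1/t) * ((1/t) * t^((1:ℝ)/2)) = t^(-(3/2):ℝ) := by
    simp only [one_div]
    rw [← Real.rpow_neg_one t, ← Real.rpow_add ht0, ← Real.rpow_add ht0]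
    norm_num
  have htc : (1/t) * (1/t) ≤ t^(-(3/2):ℝ) := by
    have h1 : (1/t)*(1/t) = t^(-(2:ℝ)) := by
      simp only [one_div]
      rw [← Real.rpow_neg_one t, ← Real.rpow_add ht0]
      norm_num
    rw [h1]
    exact Real.rpow_le_rpow_of_exponent_le ht (by norm_num)
  -- final assembly
  have A1 : 2*K2*(δ^((3:ℝ)/2)/(3/2)) = (4*K2/3)*d^((3:ℝ)/2)*t^(-(3/2):ℝ) := by
    rw [hδ32]; ring
  have A2 : (1/t)*(2*K2*δ^((1:ℝ)/2)) = 2*K2*d^((1:ℝ)/2)*t^(-(3/2):ℝ) := by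
    rw [hδ12, ← hta]; ring
  have A3 : (1/t)*((1/t)*‖G b‖) ≤ ‖G b‖*t^(-(3/2):ℝ) := by
    linarith [mul_le_mul_of_nonneg_left htc (norm_nonneg (G b))]
  have A4 : (1/t)*((1/t)*(K2*δ^(-(1/2):ℝ))) = K2*d^(-(1/2):ℝ)*t^(-(3/2):ℝ) := by
    rw [hδm12, ← htb]; ring
  have A5 : (1/t)*((1/t)*(2*M*δ^(-(1/2):ℝ) + K4))
      ≤ (2*M*d^(-(1/2):ℝ) + K4)*t^(-(3/2):ℝ) := by
    rw [hδm12]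
    have h1 : (1/t)*((1/t)*(2*M*(d^(-(1/2):ℝ)*t^((1:ℝ)/2))))
        = 2*M*d^(-(1/2):ℝ)*t^(-(3/2):ℝ) := by rw [← htb]; ring
    have h2 := mul_le_mul_of_nonneg_left htc hK4
    linarith [h1, h2]
  calc ‖∫ ω in a..b, Complex.exp (-Complex.I * t * ω) • F ω‖
      = ‖(∫ ω in a..x0, E ω • F ω) + ∫ ω in x0..b, E ω • F ω‖ := by rw [htotal]
    _ ≤ ‖∫ ω in a..x0, E ω • F ω‖ + ‖∫ ω in x0..b, E ω • F ω‖ := norm_add_le _ _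
    _ ≤ 2*K2*(δ^((3:ℝ)/2)/(3/2))
        + ((1/t)*(2*K2*δ^((1:ℝ)/2)) + (1/t)*((1/t)*‖G b‖)
          + (1/t)*((1/t)*(K2*δ^(-(1/2):ℝ))) + (1/t)*((1/t)*(2*M*δ^(-(1/2):ℝ) + K4))) :=
        add_le_add hI1 hI2
    _ ≤ ((4*K2/3) * d^((3:ℝ)/2) + 2*K2*d^((1:ℝ)/2) + ‖G b‖ + K2*d^(-(1/2):ℝ)
        + (2*M*d^(-(1/2):ℝ) + K4)) * t ^ (-(3 / 2) : ℝ) := by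
      have hnn : (0:ℝ) ≤ t ^ (-(3/2):ℝ) := Real.rpow_nonneg ht0.le _
      linarith [A1, A2, A3, A4, A5]
end

section
/- Let a < b, B a Banach space, F ∈ C([a,b], B) with F(a) = F(b) = 0, and extend F by zero outside [a,b]. If F is differentiable on (a, b) with ‖F'(ω)‖ ≤ M (ω − a)^{-1/2} near a and F' integrable on (a, b), then the extended F is absolutely continuous on ℝ with derivative in L¹(ℝ; B), and ∫_ℝ e^{-itω} F(ω) dω = (it)^{-1} ∫_ℝ e^{-itω} F'(ω) dω for all t ≠ 0. -/
open MeasureTheory Set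

/-- First integration by parts in the Jensen–Kato lemma: if `F` is continuous, supported in
`[a,b]` with `F(a) = F(b) = 0`, differentiable on `(a,b)` with `‖F'(ω)‖ ≤ M(ω−a)^{−1/2}` near `a`
and `F'` integrable on `(a,b)`, then the zero-extension of `F` is absolutely continuous with
derivative `g = 𝟙_{(a,b)} F' ∈ L¹(ℝ; B)` and
`∫ e^{−itω} F(ω) dω = (it)^{−1} ∫ e^{−itω} g(ω) dω` for `t ≠ 0`. -/
theorem stmt17 {B : Type*} [NormedAddCommGroup B] [NormedSpace ℂ B] [CompleteSpace B]
    (a b : ℝ) (hab : a < b) (F F' : ℝ → B) (M : ℝ)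
    (hFc : Continuous F)
    (hsupp : ∀ ω : ℝ, ω ∉ Icc a b → F ω = 0)
    (hFa : F a = 0) (hFb : F b = 0)
    (hd : ∀ ω ∈ Ioo a b, HasDerivAt F (F' ω) ω)
    (hM : ∃ c : ℝ, a < c ∧ c ≤ b ∧ ∀ ω ∈ Ioo a c, ‖F' ω‖ ≤ M * (ω - a) ^ (-(1 / 2) : ℝ))
    (hint : IntegrableOn F' (Ioo a b)) :
    Integrable ((Ioo a b).indicator F') ∧
    (∀ x y : ℝ, F y - F x = ∫ ω in x..y, (Ioo a b).indicator F' ω) ∧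
    ∀ t : ℝ, t ≠ 0 →
      ∫ ω : ℝ, Complex.exp (-Complex.I * t * ω) • F ω =
        (Complex.I * t)⁻¹ •
          ∫ ω : ℝ, Complex.exp (-Complex.I * t * ω) • (Ioo a b).indicator F' ω := by
  set g : ℝ → B := (Ioo a b).indicator F' with hg_def
  have hg : Integrable g := by
    rw [hg_def, integrable_indicator_iff measurableSet_Ioo]; exact hint
  -- FTC on [a, x] for x ∈ [a, b]
  have hFTC : ∀ x ∈ Icc a b, (∫ ω in a..x, F' ω) = F x := by
    intro x hx
    have h1 : (∫ ω in a..x, F' ω) = F x - F a := by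
      apply intervalIntegral.integral_eq_sub_of_hasDerivAt_of_le hx.1 hFc.continuousOn
      · intro y hy; exact hd y ⟨hy.1, lt_of_lt_of_le hy.2 hx.2⟩
      · exact (intervalIntegrable_iff_integrableOn_Ioo_of_le hx.1).2
          (hint.mono_set (Ioo_subset_Ioo le_rfl hx.2))
    rw [h1, hFa, sub_zero]
  -- value formula for the primitive
  have hFval : ∀ x : ℝ, F x = ∫ ω in a..x, g ω := by
    intro x
    rcases le_or_gt x a with hxa | hax
    · have hFx : F x = 0 := by
        rcases eq_or_lt_of_le hxa with rfl | h
        · exact hFa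
        · exact hsupp x (fun hmem => absurd hmem.1 (not_le.2 h))
      rw [hFx, intervalIntegral.integral_symm, intervalIntegral.integral_of_le hxa,
        setIntegral_eq_zero_of_forall_eq_zero, neg_zero]
      intro ω hω
      exact indicator_of_notMem (fun hmem => absurd hmem.1 (not_lt.2 hω.2)) F'
    · rcases le_or_gt x b with hxb | hbx
      · -- a < x ≤ b
        have : (∫ ω in a..x, g ω) = ∫ ω in a..x, F' ω := by
          rw [intervalIntegral.integral_of_le hax.le, intervalIntegral.integral_of_le hax.le,
            integral_Ioc_eq_integral_Ioo, integral_Ioc_eq_integral_Ioo]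
          refine setIntegral_congr_fun measurableSet_Ioo fun ω hω => ?_
          exact indicator_of_mem (show ω ∈ Ioo a b from ⟨hω.1, lt_of_lt_of_le hω.2 hxb⟩) F'
        rw [this, hFTC x ⟨hax.le, hxb⟩]
      · -- x > b
        have hFx : F x = 0 := hsupp x (fun hmem => absurd hmem.2 (not_le.2 hbx))
        have h1 : (∫ ω in a..b, g ω) + (∫ ω in b..x, g ω) = ∫ ω in a..x, g ω :=
          intervalIntegral.integral_add_adjacent_intervals hg.intervalIntegrable
            hg.intervalIntegrable
        have h2 : (∫ ω in b..x, g ω) = 0 := by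
          rw [intervalIntegral.integral_of_le hbx.le,
            setIntegral_eq_zero_of_forall_eq_zero]
          intro ω hω
          exact indicator_of_notMem (fun hmem => absurd hmem.2 (not_lt.2 hω.1.le)) F'
        have h3 : (∫ ω in a..b, g ω) = 0 := by
          have : (∫ ω in a..b, g ω) = ∫ ω in a..b, F' ω := by
            rw [intervalIntegral.integral_of_le hab.le, intervalIntegral.integral_of_le hab.le,
              integral_Ioc_eq_integral_Ioo, integral_Ioc_eq_integral_Ioo]
            exact setIntegral_congr_fun measurableSet_Ioo fun ω hω => indicator_of_mem hω F'
          rw [this, hFTC b ⟨hab.le, le_rfl⟩, hFb]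
        rw [hFx, ← h1, h2, h3, add_zero]
  refine ⟨hg, ?_, ?_⟩
  · intro x y
    rw [hFval x, hFval y,
      intervalIntegral.integral_interval_sub_left hg.intervalIntegrable hg.intervalIntegrable]
  · intro t ht
    set e : ℝ → ℂ := fun ω => Complex.exp (-Complex.I * t * ω) with he_def
    have he_norm : ∀ ω : ℝ, ‖e ω‖ ≤ 1 := by
      intro ω
      rw [he_def]
      simp only [Complex.norm_exp]
      have : (-Complex.I * t * ω).re = 0 := by simp
      rw [this, Real.exp_zero]
    have he_cont : Continuous e := by
      rw [he_def]; fun_prop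
    have he_deriv : ∀ ω : ℝ, HasDerivAt e ((-Complex.I * t) * e ω) ω := by
      intro ω
      have h1 : HasDerivAt (fun ω : ℝ => -Complex.I * t * ω) (-Complex.I * t) ω := by
        simpa using (Complex.ofRealCLM.hasDerivAt (x := ω)).const_mul (-Complex.I * t)
      simpa [he_def, mul_comm] using h1.cexp
    -- integrability of the integrands
    have hFcs : HasCompactSupport F :=
      HasCompactSupport.intro isCompact_Icc hsupp
    have hF_int : Integrable F := hFc.integrable_of_hasCompactSupport hFcs
    have he_memtop : ∀ μ : Measure ℝ, MemLp e ⊤ μ := fun μ =>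
      memLp_top_of_bound (he_cont.aestronglyMeasurable) 1 (Filter.Eventually.of_forall he_norm)
    have heF_int : Integrable (fun ω => e ω • F ω) :=
      hF_int.smul_of_top_right (he_memtop _)
    have heg_int : Integrable (fun ω => e ω • g ω) :=
      hg.smul_of_top_right (he_memtop _)
    -- reduce both full-line integrals to interval integrals over [a,b]
    have hL : (∫ ω : ℝ, e ω • F ω) = ∫ ω in a..b, e ω • F ω := by
      rw [intervalIntegral.integral_of_le hab.le, integral_Ioc_eq_integral_Ioo,
        setIntegral_eq_integral_of_forall_compl_eq_zero (s := Ioo a b)]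
      intro ω hω
      have hFω : F ω = 0 := by
        by_cases hmem : ω ∈ Icc a b
        · rcases eq_or_lt_of_le hmem.1 with rfl | h1
          · exact hFa
          · rcases eq_or_lt_of_le hmem.2 with rfl | h2
            · exact hFb
            · exact absurd ⟨h1, h2⟩ hω
        · exact hsupp ω hmem
      rw [hFω, smul_zero]
    have hR : (∫ ω : ℝ, e ω • g ω) = ∫ ω in a..b, e ω • F' ω := by
      have : ∀ ω : ℝ, e ω • g ω = (Ioo a b).indicator (fun ω => e ω • F' ω) ω := by
        intro ω
        by_cases hω : ω ∈ Ioo a b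
        · rw [hg_def, indicator_of_mem hω, indicator_of_mem hω]
        · rw [hg_def, indicator_of_notMem hω, indicator_of_notMem hω, smul_zero]
      simp_rw [this]
      rw [integral_indicator measurableSet_Ioo, intervalIntegral.integral_of_le hab.le,
        integral_Ioc_eq_integral_Ioo]
    -- integration by parts
    have heF'_II : IntervalIntegrable (fun ω => e ω • F' ω) volume a b := by
      refine (intervalIntegrable_iff_integrableOn_Ioo_of_le hab.le).2 ?_
      exact hint.smul_of_top_right (he_memtop _)
    have heF_II : IntervalIntegrable (fun ω => (-Complex.I * t * e ω) • F ω) volume a b := by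
      have : (fun ω => (-Complex.I * t * e ω) • F ω)
          = fun ω => (-Complex.I * t) • (e ω • F ω) := by
        funext ω; rw [smul_smul]
      rw [this]
      exact (heF_int.smul (-Complex.I * t)).intervalIntegrable
    have hIBP : (∫ ω in a..b, (e ω • F' ω + (-Complex.I * t * e ω) • F ω)) = 0 := by
      have := intervalIntegral.integral_eq_sub_of_hasDerivAt_of_le hab.le
        (f := fun ω => e ω • F ω)
        (f' := fun ω => e ω • F' ω + (-Complex.I * t * e ω) • F ω)
        (by exact (he_cont.smul hFc).continuousOn)
        (fun ω hω => (he_deriv ω).smul (hd ω hω))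
        (heF'_II.add heF_II)
      rw [this]
      simp [hFa, hFb]
    have hsplit : (∫ ω in a..b, e ω • F' ω)
        + (-Complex.I * t) • (∫ ω in a..b, e ω • F ω) = 0 := by
      have h2 : (∫ ω in a..b, (-Complex.I * t * e ω) • F ω)
          = (-Complex.I * t) • ∫ ω in a..b, e ω • F ω := by
        rw [← intervalIntegral.integral_smul]
        exact intervalIntegral.integral_congr fun ω _ =>
          (smul_smul (-Complex.I * (t : ℂ)) (e ω) (F ω)).symm
      rw [← h2, ← intervalIntegral.integral_add heF'_II heF_II]
      exact hIBP
    have hne : (Complex.I * t) ≠ 0 :=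
      mul_ne_zero Complex.I_ne_zero (Complex.ofReal_ne_zero.mpr ht)
    have key : (∫ ω : ℝ, e ω • F ω)
        = (Complex.I * t)⁻¹ • ∫ ω : ℝ, e ω • g ω := by
      rw [hL, hR]
      have hY : (∫ ω in a..b, e ω • F' ω)
          = (Complex.I * t) • ∫ ω in a..b, e ω • F ω := by
        have := hsplit
        rw [add_eq_zero_iff_eq_neg] at this
        rw [this, neg_mul, neg_smul, neg_neg]
      rw [hY, inv_smul_smul₀ hne]
    exact key
end
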